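/- The L^0-extension of an L^∞-normed module is unique up to isometric L^0-module isomorphism: if (E_0, ‖·‖_0) with T : E → E_0 and (S, ‖·‖_S) with R : E → S are both complete random normed modules with L^∞-module homomorphisms preserving the norm (‖Tx‖_0 = ‖x‖ = ‖Rx‖_S for all x) and having dense images, then there exists an L^0-module isomorphism U : E_0 → S with ‖Ux‖_S = ‖x‖_0 for all x ∈ E_0. -/

import Mathlib

open MeasureTheory Filter
noncomputable section

variable {Ω : Type} [MeasurableSpace Ω] {μ : Measure Ω}

/-- `L⁰(𝓕)`: equivalence classes of random variables, as a commutative ring. -/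
instance : NatCast (Ω →ₘ[μ] ℝ) := ⟨fun n => AEEqFun.const Ω (n : ℝ)⟩
instance : IntCast (Ω →ₘ[μ] ℝ) := ⟨fun n => AEEqFun.const Ω (n : ℝ)⟩
instance : CommRing (Ω →ₘ[μ] ℝ) :=
  AEEqFun.toGerm_injective.commRing AEEqFun.toGerm AEEqFun.zero_toGerm AEEqFun.one_toGerm
    AEEqFun.add_toGerm AEEqFun.mul_toGerm AEEqFun.neg_toGerm AEEqFun.sub_toGerm
    (fun _ _ => AEEqFun.smul_toGerm _ _) (fun _ _ => AEEqFun.smul_toGerm _ _)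
    AEEqFun.pow_toGerm (fun _ => rfl) (fun _ => rfl)

/-- `L^∞(𝓕)`: the subring of essentially bounded random variables. -/
def Linf (μ : Measure Ω) : Subring (Ω →ₘ[μ] ℝ) where
  carrier := {ξ | ∃ c : ℝ, ∀ᵐ ω ∂μ, |ξ ω| ≤ c}
  zero_mem' := ⟨0, by filter_upwards [AEEqFun.coeFn_zero (β := ℝ) (μ := μ)] with ω h; simp [h]⟩
  one_mem' := ⟨1, by filter_upwards [AEEqFun.coeFn_one (β := ℝ) (μ := μ)] with ω h; simp [h]⟩
  add_mem' := by
    rintro a b ⟨c, hc⟩ ⟨d, hd⟩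
    exact ⟨c + d, by
      filter_upwards [AEEqFun.coeFn_add a b, hc, hd] with ω h1 h2 h3
      calc |(a + b) ω| = |a ω + b ω| := by rw [h1]; rfl
        _ ≤ |a ω| + |b ω| := abs_add_le _ _
        _ ≤ c + d := add_le_add h2 h3⟩
  mul_mem' := by
    rintro a b ⟨c, hc⟩ ⟨d, hd⟩
    exact ⟨|c| * |d|, by
      filter_upwards [AEEqFun.coeFn_mul a b, hc, hd] with ω h1 h2 h3
      calc |(a * b) ω| = |a ω * b ω| := by rw [h1]; rfl
        _ = |a ω| * |b ω| := abs_mul _ _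
        _ ≤ |c| * |d| :=
            mul_le_mul (h2.trans (le_abs_self c)) (h3.trans (le_abs_self d))
              (abs_nonneg _) (abs_nonneg _)⟩
  neg_mem' := by
    rintro a ⟨c, hc⟩
    exact ⟨c, by
      filter_upwards [AEEqFun.coeFn_neg a, hc] with ω h1 h2
      calc |(-a) ω| = |-(a ω)| := by rw [h1]; rfl
        _ = |a ω| := abs_neg _
        _ ≤ c := h2⟩

/-- the constant `c`, as an element of `L^∞`. -/
def LinfConst (μ : Measure Ω) (c : ℝ) : Linf μ :=
  ⟨AEEqFun.const Ω c, |c|, by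
    filter_upwards [AEEqFun.coeFn_const (α := Ω) (μ := μ) c] with ω h
    simp [h, Function.const]⟩

/-- the equivalence class `Ĩ_A` of the indicator function of a set `A`. -/
def indL0 (μ : Measure Ω) (A : Set Ω) (hA : MeasurableSet A) : Ω →ₘ[μ] ℝ :=
  AEEqFun.mk (A.indicator (1 : Ω → ℝ)) ((measurable_const.indicator hA).aestronglyMeasurable)

/-- a countable measurable partition of `Ω`. -/
structure MPartition (Ω : Type) [MeasurableSpace Ω] where
  A : ℕ → Set Ω
  meas : ∀ k, MeasurableSet (A k)
  disj : ∀ m k, m ≠ k → A m ∩ A k = ∅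
  cover : (⋃ k, A k) = Set.univ

/-- `Ĩ_{A_k}` for a member of a countable measurable partition. -/
def MPartition.ind (P : MPartition Ω) (μ : Measure Ω) (k : ℕ) : Ω →ₘ[μ] ℝ :=
  indL0 μ (P.A k) (P.meas k)

/-- `‖·‖` is an `L⁰`-norm making the `L⁰`-module `S` a random normed module. -/
structure IsRNNorm (μ : Measure Ω) {S : Type} [AddCommGroup S]
    [Module (Ω →ₘ[μ] ℝ) S] (n : S → Ω →ₘ[μ] ℝ) : Prop where
  nonneg : ∀ x, 0 ≤ n x
  eq_zero_iff : ∀ x, n x = 0 ↔ x = 0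
  norm_smul : ∀ (ξ : Ω →ₘ[μ] ℝ) (x : S), n (ξ • x) = |ξ| * n x
  norm_add_le : ∀ x y, n (x + y) ≤ n x + n y

/-- `‖·‖` is an `L^∞`-norm making the `L^∞`-module `E` an `L^∞`-normed module. -/
structure IsLinfNorm (μ : Measure Ω) {E : Type} [AddCommGroup E]
    [Module (Linf μ) E] (n : E → Ω →ₘ[μ] ℝ) : Prop where
  nonneg : ∀ x, 0 ≤ n x
  mem_Linf : ∀ x, n x ∈ Linf μ
  eq_zero_iff : ∀ x, n x = 0 ↔ x = 0
  norm_smul : ∀ (ξ : Linf μ) (x : E), n (ξ • x) = |(ξ : Ω →ₘ[μ] ℝ)| * n x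
  norm_add_le : ∀ x y, n (x + y) ≤ n x + n y

/-- the metric `d(x,y) = E[1 ∧ ‖x-y‖]` associated to an `L⁰`- (or `L^∞`-) norm. -/
def ndist {S : Type} [AddCommGroup S] (μ : Measure Ω) (n : S → Ω →ₘ[μ] ℝ) (x y : S) : ℝ :=
  ∫ ω, min 1 |n (x - y) ω| ∂μ

/-- the distance of convergence in probability on `L⁰`. -/
def dProb (μ : Measure Ω) (ξ η : Ω →ₘ[μ] ℝ) : ℝ := ∫ ω, min 1 |ξ ω - η ω| ∂μ

/-- Cauchy property of a sequence with respect to a distance function. -/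
def dCauchy {S : Type} (d : S → S → ℝ) (x : ℕ → S) : Prop :=
  ∀ ε > (0:ℝ), ∃ N : ℕ, ∀ m ≥ N, ∀ k ≥ N, d (x m) (x k) < ε

/-- convergence of a sequence with respect to a distance function. -/
def dTendsto {S : Type} (d : S → S → ℝ) (x : ℕ → S) (y : S) : Prop :=
  Tendsto (fun k => d (x k) y) atTop (nhds 0)

/-- completeness with respect to a distance function. -/
def dComplete {S : Type} (d : S → S → ℝ) : Prop :=
  ∀ x : ℕ → S, dCauchy d x → ∃ y, dTendsto d x y

/-- a bundled complete-or-not random normed module over `L⁰(𝓕)`. -/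
structure RNMod (Ω : Type) [MeasurableSpace Ω] (μ : Measure Ω) where
  carrier : Type
  acg : AddCommGroup carrier
  mod : @Module (Ω →ₘ[μ] ℝ) carrier _ acg.toAddCommMonoid
  rnorm : carrier → Ω →ₘ[μ] ℝ
  isRNNorm : IsRNNorm μ rnorm

attribute [instance] RNMod.acg RNMod.mod

/-- the metric of the `(ε,λ)`-topology of a random normed module. -/
def RNMod.dist (S : RNMod Ω μ) : S.carrier → S.carrier → ℝ := ndist μ S.rnorm

/-- completeness of a random normed module in the `(ε,λ)`-topology. -/
def RNMod.Complete (S : RNMod Ω μ) : Prop := dComplete S.dist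

/-- the essential supremum `‖ξ‖_∞` of (the absolute value of) a random variable. -/
def NinfV (μ : Measure Ω) (ξ : Ω →ₘ[μ] ℝ) : ℝ := essSup (fun ω => |ξ ω|) μ

/-- `T` is an `L^∞`-module homomorphism from `E` into (the `L^∞`-module underlying) `S`. -/
def IsLinfModHom (μ : Measure Ω) {E S : Type} [AddCommGroup E] [Module (Linf μ) E]
    [AddCommGroup S] [Module (Ω →ₘ[μ] ℝ) S] (T : E → S) : Prop :=
  (∀ x y, T (x + y) = T x + T y) ∧
  (∀ (ξ : Linf μ) (x : E), T (ξ • x) = ((ξ : Ω →ₘ[μ] ℝ)) • T x)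

/-- `S` together with `T` is an `L⁰`-extension of the `L^∞`-normed module `(E, n)`:
`S` is a complete random normed module, `T` is a norm-preserving `L^∞`-module
homomorphism with dense range. -/
def IsL0Extension (μ : Measure Ω) {E : Type} [AddCommGroup E] [Module (Linf μ) E]
    (n : E → Ω →ₘ[μ] ℝ) (S : RNMod Ω μ) (T : E → S.carrier) : Prop :=
  S.Complete ∧ IsLinfModHom μ T ∧ (∀ x, S.rnorm (T x) = n x) ∧
  (∀ y : S.carrier, ∀ ε > (0:ℝ), ∃ x : E, S.dist (T x) y < ε)

/-- the set of elements of an `L⁰`-normed module with essentially bounded norm. -/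
def LinfPart (μ : Measure Ω) {S : Type} (n : S → Ω →ₘ[μ] ℝ) : Set S := {x | n x ∈ Linf μ}

/-- convergence in probability of a sequence of random variables. -/
def TendstoInProb (μ : Measure Ω) (ξ : ℕ → Ω →ₘ[μ] ℝ) (l : Ω →ₘ[μ] ℝ) : Prop :=
  Tendsto (fun k => dProb μ (ξ k) l) atTop (nhds 0)

/-- the countable concatenation hull `H⁰_cc(E)` of a subset `E` of a random normed module. -/
def Hcc (S : RNMod Ω μ) (E : Set S.carrier) : Set S.carrier :=
  {z | ∃ (x : ℕ → S.carrier) (P : MPartition Ω),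
    (∀ k, x k ∈ E) ∧ ∀ k, P.ind μ k • z = P.ind μ k • x k}

/-- `L(E) = L⁰ * E`, the set of `L⁰`-multiples of elements of `E`. -/
def Lgen (S : RNMod Ω μ) (E : Set S.carrier) : Set S.carrier :=
  {z | ∃ (ξ : Ω →ₘ[μ] ℝ) (x : S.carrier), x ∈ E ∧ z = ξ • x}

/-- `f` is a continuous `L^∞`-module homomorphism from `(E, n)` to `L^∞`, i.e. a member of
the dual `L^∞`-normed module `E′`. -/
def IsLinfDual (μ : Measure Ω) {E : Type} [AddCommGroup E] [Module (Linf μ) E]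
    (n : E → Ω →ₘ[μ] ℝ) (f : E → Ω →ₘ[μ] ℝ) : Prop :=
  (∀ x, f x ∈ Linf μ) ∧ (∀ x y, f (x + y) = f x + f y) ∧
  (∀ (ξ : Linf μ) (x : E), f (ξ • x) = (ξ : Ω →ₘ[μ] ℝ) * f x) ∧
  (∀ ε > (0:ℝ), ∃ δ > (0:ℝ), ∀ x, NinfV μ (n x) < δ → NinfV μ (f x) < ε)

/-- `g` is a continuous `L⁰`-module homomorphism from `S` to `L⁰`, i.e. a member of the
random conjugate space `S^*`. -/
def IsRNDual (μ : Measure Ω) (S : RNMod Ω μ) (g : S.carrier → Ω →ₘ[μ] ℝ) : Prop :=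
  (∀ x y, g (x + y) = g x + g y) ∧ (∀ (ξ : Ω →ₘ[μ] ℝ) x, g (ξ • x) = ξ * g x) ∧
  (∀ ε > (0:ℝ), ∃ δ > (0:ℝ), ∀ x, ndist μ S.rnorm x 0 < δ → dProb μ (g x) 0 < ε)

/-- the set `{|f(x)| : ‖x‖ ≤ 1}` whose supremum in the lattice `L⁰` is the dual norm `‖f‖′`. -/
def dualBall {X : Type} (n : X → Ω →ₘ[μ] ℝ) (f : X → Ω →ₘ[μ] ℝ) : Set (Ω →ₘ[μ] ℝ) :=
  {t | ∃ x, n x ≤ 1 ∧ t = |f x|}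

set_option linter.unusedSectionVars false
set_option linter.unusedVariables false

lemma min1_mono {s t : ℝ} (h : s ≤ t) : min 1 s ≤ min 1 t := min_le_min le_rfl h

lemma min1_subadd (s t : ℝ) (hs : 0 ≤ s) (ht : 0 ≤ t) :
    min 1 (s + t) ≤ min 1 s + min 1 t := by
  have h1 : (0:ℝ) ≤ min 1 s := le_min zero_le_one hs
  have h2 : (0:ℝ) ≤ min 1 t := le_min zero_le_one ht
  rcases le_or_gt 1 s with h | h
  · rw [min_eq_left h]; have := min_le_left 1 (s+t); linarith
  rcases le_or_gt 1 t with h' | h'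
  · rw [min_eq_left h']; have := min_le_left 1 (s+t); linarith
  · rw [min_eq_right h.le, min_eq_right h'.le]
    exact min_le_right _ _

lemma min1_mul (c t : ℝ) (ht : 0 ≤ t) : min 1 (c * t) ≤ max 1 c * min 1 t := by
  rcases le_or_gt 1 t with h | h
  · rw [min_eq_left h]
    calc min 1 (c*t) ≤ 1 := min_le_left _ _
      _ ≤ max 1 c * 1 := by rw [mul_one]; exact le_max_left _ _
  · rw [min_eq_right h.le]
    calc min 1 (c*t) ≤ c * t := min_le_right _ _
      _ ≤ max 1 c * t := mul_le_mul_of_nonneg_right (le_max_right _ _) ht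

section F
variable (μ) [IsProbabilityMeasure μ]

/-- the basic functional `F ξ = ∫ min 1 |ξ|`. -/
def Fd (ξ : Ω →ₘ[μ] ℝ) : ℝ := ∫ ω, min 1 |ξ ω| ∂μ

variable {μ}

lemma Fd_integrable (ξ : Ω →ₘ[μ] ℝ) : Integrable (fun ω => min 1 |ξ ω|) μ := by
  have hm : AEStronglyMeasurable (fun ω => min 1 |ξ ω|) μ :=
    ((continuous_const.min continuous_abs).measurable.comp_aemeasurable
      ξ.aestronglyMeasurable.aemeasurable).aestronglyMeasurable
  refine ⟨hm, ?_⟩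
  apply HasFiniteIntegral.of_bounded (C := 1)
  filter_upwards with ω
  rw [Real.norm_eq_abs, abs_of_nonneg (le_min zero_le_one (abs_nonneg _))]
  exact min_le_left _ _

lemma Fd_nonneg (ξ : Ω →ₘ[μ] ℝ) : 0 ≤ Fd μ ξ :=
  integral_nonneg fun ω => le_min zero_le_one (abs_nonneg _)

lemma Fd_congr {ξ η : Ω →ₘ[μ] ℝ} (h : ⇑ξ =ᵐ[μ] ⇑η) : Fd μ ξ = Fd μ η := by
  refine integral_congr_ae ?_
  filter_upwards [h] with ω hω; rw [hω]

lemma Fd_mono {ξ η : Ω →ₘ[μ] ℝ} (h : ∀ᵐ ω ∂μ, |ξ ω| ≤ |η ω|) : Fd μ ξ ≤ Fd μ η := by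
  refine integral_mono_ae (Fd_integrable ξ) (Fd_integrable η) ?_
  filter_upwards [h] with ω hω; exact min1_mono hω

lemma Fd_eq_zero {ξ : Ω →ₘ[μ] ℝ} (h : Fd μ ξ = 0) : ξ = 0 := by
  have h0 : ∀ᵐ ω ∂μ, min 1 |ξ ω| = 0 := by
    have := (integral_eq_zero_iff_of_nonneg_ae
      (Filter.Eventually.of_forall fun ω => le_min zero_le_one (abs_nonneg _))
      (Fd_integrable ξ)).1 h
    filter_upwards [this] with ω hω; exact hω
  have : ⇑ξ =ᵐ[μ] (0 : Ω → ℝ) := by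
    filter_upwards [h0] with ω hω
    rcases min_eq_iff.1 hω with ⟨h1, _⟩ | ⟨h2, _⟩
    · norm_num at h1
    · simpa [abs_eq_zero] using h2
  exact AEEqFun.ext (this.trans (AEEqFun.coeFn_zero (μ := μ)).symm)

lemma Fd_zero : Fd μ (0 : Ω →ₘ[μ] ℝ) = 0 := by
  have : Fd μ (0 : Ω →ₘ[μ] ℝ) = ∫ _ω, (0:ℝ) ∂μ := by
    refine integral_congr_ae ?_
    filter_upwards [AEEqFun.coeFn_zero (β := ℝ) (μ := μ)] with ω hω
    simp [hω]
  simpa using this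

lemma Fd_eq_zero_iff {ξ : Ω →ₘ[μ] ℝ} : Fd μ ξ = 0 ↔ ξ = 0 :=
  ⟨Fd_eq_zero, fun h => h ▸ Fd_zero⟩

lemma Fd_add_le (ξ η : Ω →ₘ[μ] ℝ) : Fd μ (ξ + η) ≤ Fd μ ξ + Fd μ η := by
  rw [Fd, Fd, Fd, ← integral_add (Fd_integrable ξ) (Fd_integrable η)]
  refine integral_mono_ae (Fd_integrable _) ((Fd_integrable ξ).add (Fd_integrable η)) ?_
  filter_upwards [AEEqFun.coeFn_add ξ η] with ω hω
  calc min 1 |(ξ + η) ω| = min 1 |ξ ω + η ω| := by rw [hω]; simp [Pi.add_apply]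
    _ ≤ min 1 (|ξ ω| + |η ω|) := min1_mono (abs_add_le _ _)
    _ ≤ min 1 |ξ ω| + min 1 |η ω| := min1_subadd _ _ (abs_nonneg _) (abs_nonneg _)

end F

-- ===== Part 2: AEEqFun order helpers, RNMod distance lemmas =====
section Part2
variable {Ω : Type} [MeasurableSpace Ω] {μ : Measure Ω} [IsProbabilityMeasure μ]
set_option linter.unusedSectionVars false

lemma ae_le_of_le {ξ η : Ω →ₘ[μ] ℝ} (h : ξ ≤ η) : ∀ᵐ ω ∂μ, ξ ω ≤ η ω :=
  AEEqFun.coeFn_le.2 h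

lemma ae_nonneg_of_le {ξ : Ω →ₘ[μ] ℝ} (h : 0 ≤ ξ) : ∀ᵐ ω ∂μ, 0 ≤ ξ ω := by
  filter_upwards [ae_le_of_le h, AEEqFun.coeFn_zero (β := ℝ) (μ := μ)] with ω h1 h2
  rw [h2] at h1; exact h1

lemma abs_neg_one : |(-(1 : Ω →ₘ[μ] ℝ))| = 1 := by
  refine AEEqFun.ext ?_
  filter_upwards [AEEqFun.coeFn_abs (-(1 : Ω →ₘ[μ] ℝ)),
    AEEqFun.coeFn_neg (1 : Ω →ₘ[μ] ℝ), AEEqFun.coeFn_one (β := ℝ) (μ := μ)] with ω h1 h2 h3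
  rw [h1, h2, Pi.neg_apply, h3]; simp

lemma Fd_congr_abs {ξ η : Ω →ₘ[μ] ℝ} (h : ∀ᵐ ω ∂μ, |ξ ω| = |η ω|) : Fd μ ξ = Fd μ η := by
  refine integral_congr_ae ?_
  filter_upwards [h] with ω hω; rw [hω]

lemma Fd_le_of_le {ξ η : Ω →ₘ[μ] ℝ} (h0 : 0 ≤ ξ) (h : ξ ≤ η) : Fd μ ξ ≤ Fd μ η := by
  refine Fd_mono ?_
  filter_upwards [ae_nonneg_of_le h0, ae_le_of_le h] with ω h1 h2
  rw [abs_of_nonneg h1, abs_of_nonneg (h1.trans h2)]; exact h2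

lemma Fd_mul_le {ξ : Ω →ₘ[μ] ℝ} (η : Ω →ₘ[μ] ℝ) {c : ℝ}
    (h : ∀ᵐ ω ∂μ, |ξ ω| ≤ c) : Fd μ (ξ * η) ≤ max 1 c * Fd μ η := by
  have : max 1 c * Fd μ η = ∫ ω, max 1 c * min 1 |η ω| ∂μ := by
    rw [integral_const_mul]; rfl
  rw [this]
  refine integral_mono_ae (Fd_integrable _) ((Fd_integrable η).const_mul _) ?_
  filter_upwards [AEEqFun.coeFn_mul ξ η, h] with ω h1 h2
  calc min 1 |(ξ * η) ω| = min 1 (|ξ ω| * |η ω|) := by rw [h1]; simp [Pi.mul_apply, abs_mul]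
    _ ≤ min 1 (c * |η ω|) :=
        min1_mono (mul_le_mul_of_nonneg_right h2 (abs_nonneg _))
    _ ≤ max 1 c * min 1 |η ω| := min1_mul _ _ (abs_nonneg _)

-- distances
lemma rnorm_zero (S : RNMod Ω μ) : S.rnorm 0 = 0 := (S.isRNNorm.eq_zero_iff 0).2 rfl

lemma rnorm_neg (S : RNMod Ω μ) (x : S.carrier) : S.rnorm (-x) = S.rnorm x := by
  rw [← neg_one_smul (Ω →ₘ[μ] ℝ) x, S.isRNNorm.norm_smul]
  show |(-(1:Ω →ₘ[μ] ℝ))| * _ = _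
  rw [abs_neg_one, one_mul]

lemma rn_dist_def (S : RNMod Ω μ) (x y : S.carrier) :
    S.dist x y = Fd μ (S.rnorm (x - y)) := rfl

lemma rn_dist_nonneg (S : RNMod Ω μ) (x y : S.carrier) : 0 ≤ S.dist x y := Fd_nonneg _

lemma rn_dist_self (S : RNMod Ω μ) (x : S.carrier) : S.dist x x = 0 := by
  rw [rn_dist_def, sub_self, rnorm_zero, Fd_zero]

lemma rn_dist_symm (S : RNMod Ω μ) (x y : S.carrier) : S.dist x y = S.dist y x := by
  rw [rn_dist_def, rn_dist_def, ← neg_sub x y, rnorm_neg]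

lemma rn_dist_eq_zero_iff (S : RNMod Ω μ) (x y : S.carrier) : S.dist x y = 0 ↔ x = y := by
  rw [rn_dist_def, Fd_eq_zero_iff, S.isRNNorm.eq_zero_iff, sub_eq_zero]

lemma rn_dist_triangle (S : RNMod Ω μ) (x y z : S.carrier) :
    S.dist x z ≤ S.dist x y + S.dist y z := by
  rw [rn_dist_def, rn_dist_def, rn_dist_def]
  calc Fd μ (S.rnorm (x - z)) ≤ Fd μ (S.rnorm (x - y) + S.rnorm (y - z)) := by
        refine Fd_le_of_le (S.isRNNorm.nonneg _) ?_
        have := S.isRNNorm.norm_add_le (x - y) (y - z)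
        rwa [sub_add_sub_cancel] at this
    _ ≤ _ := Fd_add_le _ _

lemma rn_dist_add_le (S : RNMod Ω μ) (a b c d : S.carrier) :
    S.dist (a + b) (c + d) ≤ S.dist a c + S.dist b d := by
  rw [rn_dist_def, rn_dist_def, rn_dist_def]
  have h : a + b - (c + d) = (a - c) + (b - d) := by abel
  rw [h]
  calc Fd μ (S.rnorm ((a-c) + (b-d))) ≤ Fd μ (S.rnorm (a-c) + S.rnorm (b-d)) :=
        Fd_le_of_le (S.isRNNorm.nonneg _) (S.isRNNorm.norm_add_le _ _)
    _ ≤ _ := Fd_add_le _ _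

lemma rn_dist_smul_le (S : RNMod Ω μ) (ξ : Ω →ₘ[μ] ℝ) {c : ℝ} (hc : ∀ᵐ ω ∂μ, |ξ ω| ≤ c)
    (x y : S.carrier) : S.dist (ξ • x) (ξ • y) ≤ max 1 c * S.dist x y := by
  rw [rn_dist_def, rn_dist_def, ← smul_sub, S.isRNNorm.norm_smul]
  refine Fd_mul_le _ ?_
  filter_upwards [AEEqFun.coeFn_abs ξ, hc] with ω h1 h2
  rw [h1]; simpa using h2

-- dProb
lemma dProb_eq (ξ η : Ω →ₘ[μ] ℝ) : dProb μ ξ η = Fd μ (ξ - η) := by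
  refine integral_congr_ae ?_
  filter_upwards [AEEqFun.coeFn_sub ξ η] with ω hω
  rw [hω, Pi.sub_apply]

lemma dProb_nonneg (ξ η : Ω →ₘ[μ] ℝ) : 0 ≤ dProb μ ξ η := by
  rw [dProb_eq]; exact Fd_nonneg _

lemma dProb_eq_zero {ξ η : Ω →ₘ[μ] ℝ} (h : dProb μ ξ η = 0) : ξ = η := by
  rw [dProb_eq] at h; have := Fd_eq_zero h; exact sub_eq_zero.1 this

lemma dProb_triangle (a b c : Ω →ₘ[μ] ℝ) : dProb μ a c ≤ dProb μ a b + dProb μ b c := by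
  rw [dProb_eq, dProb_eq, dProb_eq, ← sub_add_sub_cancel a b c]
  exact Fd_add_le _ _

lemma dProb_rnorm_le (S : RNMod Ω μ) (x y : S.carrier) :
    dProb μ (S.rnorm x) (S.rnorm y) ≤ S.dist x y := by
  rw [dProb_eq, rn_dist_def]
  refine Fd_mono ?_
  have h1 : S.rnorm x ≤ S.rnorm (x - y) + S.rnorm y := by
    have := S.isRNNorm.norm_add_le (x - y) y
    rwa [sub_add_cancel] at this
  have h2 : S.rnorm y ≤ S.rnorm (x - y) + S.rnorm x := by
    have := S.isRNNorm.norm_add_le (y - x) x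
    rw [sub_add_cancel, ← neg_sub x y, rnorm_neg] at this
    exact this
  filter_upwards [ae_le_of_le h1, ae_le_of_le h2,
    AEEqFun.coeFn_sub (S.rnorm x) (S.rnorm y),
    AEEqFun.coeFn_add (S.rnorm (x-y)) (S.rnorm y),
    AEEqFun.coeFn_add (S.rnorm (x-y)) (S.rnorm x),
    ae_nonneg_of_le (S.isRNNorm.nonneg (x - y))] with ω e1 e2 e3 e4 e5 e6
  rw [e3, Pi.sub_apply, abs_of_nonneg e6]
  rw [e4, Pi.add_apply] at e1
  rw [e5, Pi.add_apply] at e2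
  rw [abs_le]; constructor <;> linarith

end Part2

-- ===== Part 3: clamp, dominated convergence, limit helpers =====
section Part3
variable {Ω : Type} [MeasurableSpace Ω] {μ : Measure Ω} [IsProbabilityMeasure μ]
set_option linter.unusedSectionVars false

/-- truncating a random variable to `[-k, k]`. -/
def clampAE (μ : Measure Ω) (k : ℕ) (ξ : Ω →ₘ[μ] ℝ) : Ω →ₘ[μ] ℝ :=
  AEEqFun.comp (fun x : ℝ => max (-(k:ℝ)) (min (k:ℝ) x))
    (continuous_const.max (continuous_const.min continuous_id)) ξ

lemma clampAE_coeFn (k : ℕ) (ξ : Ω →ₘ[μ] ℝ) :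
    ⇑(clampAE μ k ξ) =ᵐ[μ] fun ω => max (-(k:ℝ)) (min (k:ℝ) (ξ ω)) :=
  AEEqFun.coeFn_comp _ _ _

lemma clampAE_mem_Linf (k : ℕ) (ξ : Ω →ₘ[μ] ℝ) : clampAE μ k ξ ∈ Linf μ := by
  refine ⟨(k : ℝ), ?_⟩
  filter_upwards [clampAE_coeFn k ξ] with ω h
  rw [h, abs_le]
  refine ⟨le_max_left _ _, max_le (neg_le_self (by positivity)) (min_le_left _ _)⟩

/-- the truncation, as an element of `L^∞`. -/
def clampLinf (k : ℕ) (ξ : Ω →ₘ[μ] ℝ) : Linf μ :=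
  ⟨clampAE μ k ξ, clampAE_mem_Linf k ξ⟩

lemma clamp_eventually_eq (x : ℝ) :
    ∀ᶠ k : ℕ in atTop, max (-(k:ℝ)) (min (k:ℝ) x) = x := by
  filter_upwards [eventually_ge_atTop ⌈|x|⌉₊] with k hk
  have hx : |x| ≤ (k : ℝ) := le_trans (Nat.le_ceil _) (by exact_mod_cast hk)
  rw [abs_le] at hx
  rw [min_eq_right hx.2, max_eq_right hx.1]

lemma Fd_tendsto_of_ae (ζ : ℕ → Ω →ₘ[μ] ℝ)
    (h : ∀ᵐ ω ∂μ, Tendsto (fun k => |ζ k ω|) atTop (nhds 0)) :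
    Tendsto (fun k => Fd μ (ζ k)) atTop (nhds 0) := by
  have := tendsto_integral_of_dominated_convergence (μ := μ)
      (F := fun k ω => min 1 |ζ k ω|) (f := fun _ => (0:ℝ)) (fun _ => (1:ℝ))
      (fun k => (Fd_integrable (ζ k)).aestronglyMeasurable)
      (integrable_const 1)
      (fun k => by
        filter_upwards with ω
        rw [Real.norm_eq_abs, abs_of_nonneg (le_min zero_le_one (abs_nonneg _))]
        exact min_le_left _ _)
      (by
        filter_upwards [h] with ω hω
        have hcont : Tendsto (fun t : ℝ => min 1 t) (nhds 0) (nhds (min 1 0)) :=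
          (continuous_const.min continuous_id).tendsto 0
        have := hcont.comp hω
        simpa [Function.comp_def] using this)
  simpa [Fd] using this

lemma Fd_clamp_mul_tendsto (ξ η : Ω →ₘ[μ] ℝ) :
    Tendsto (fun k => Fd μ ((ξ - clampAE μ k ξ) * η)) atTop (nhds 0) := by
  refine Fd_tendsto_of_ae _ ?_
  have hae : ∀ᵐ ω ∂μ, ∀ k : ℕ,
      ((ξ - clampAE μ k ξ) * η) ω = (ξ ω - max (-(k:ℝ)) (min (k:ℝ) (ξ ω))) * η ω := by
    rw [ae_all_iff]
    intro k
    filter_upwards [AEEqFun.coeFn_mul (ξ - clampAE μ k ξ) η,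
      AEEqFun.coeFn_sub ξ (clampAE μ k ξ), clampAE_coeFn k ξ] with ω h1 h2 h3
    rw [h1, Pi.mul_apply, h2, Pi.sub_apply, h3]
  filter_upwards [hae] with ω hω
  have hev : (fun k : ℕ => |((ξ - clampAE μ k ξ) * η) ω|) =ᶠ[atTop] fun _ => (0:ℝ) := by
    filter_upwards [clamp_eventually_eq (ξ ω)] with k hk
    rw [hω k, hk, sub_self, zero_mul, abs_zero]
  exact tendsto_const_nhds.congr' hev.symm

lemma rn_dist_clamp_tendsto (S : RNMod Ω μ) (ξ : Ω →ₘ[μ] ℝ) (z : S.carrier) :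
    Tendsto (fun k => S.dist ((clampAE μ k ξ) • z) (ξ • z)) atTop (nhds 0) := by
  have key : ∀ k, S.dist ((clampAE μ k ξ) • z) (ξ • z)
      = Fd μ ((ξ - clampAE μ k ξ) * S.rnorm z) := by
    intro k
    rw [rn_dist_def, ← sub_smul, S.isRNNorm.norm_smul]
    refine Fd_congr_abs ?_
    filter_upwards [AEEqFun.coeFn_mul |clampAE μ k ξ - ξ| (S.rnorm z),
      AEEqFun.coeFn_mul (ξ - clampAE μ k ξ) (S.rnorm z),
      AEEqFun.coeFn_abs (clampAE μ k ξ - ξ),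
      AEEqFun.coeFn_sub (clampAE μ k ξ) ξ,
      AEEqFun.coeFn_sub ξ (clampAE μ k ξ)] with ω h1 h2 h3 h4 h5
    rw [h1, Pi.mul_apply, h3, h4, Pi.sub_apply, h2, Pi.mul_apply, h5, Pi.sub_apply]
    rw [abs_mul, abs_mul, abs_abs, abs_sub_comm]
  have := Fd_clamp_mul_tendsto ξ (S.rnorm z)
  refine this.congr fun k => (key k).symm

lemma eq_zero_of_le_tendsto {c : ℝ} (hc : 0 ≤ c) {f : ℕ → ℝ}
    (h : ∀ k, c ≤ f k) (hf : Tendsto f atTop (nhds 0)) : c = 0 :=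
  le_antisymm (le_of_tendsto_of_tendsto' tendsto_const_nhds hf h) hc

end Part3

/-- the `L⁰`-extension of an `L^∞`-normed module is unique up to
isometric `L⁰`-module isomorphism. -/
theorem L0_extension_unique
    {Ω : Type} [MeasurableSpace Ω] (μ : Measure Ω) [IsProbabilityMeasure μ]
    {E : Type} [AddCommGroup E] [Module (Linf μ) E]
    (n : E → Ω →ₘ[μ] ℝ) (hn : IsLinfNorm μ n)
    (S₁ S₂ : RNMod Ω μ) (T₁ : E → S₁.carrier) (T₂ : E → S₂.carrier)
    (h₁ : IsL0Extension μ n S₁ T₁) (h₂ : IsL0Extension μ n S₂ T₂) :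
    ∃ U : S₁.carrier → S₂.carrier,
      Function.Bijective U ∧
      (∀ x y, U (x + y) = U x + U y) ∧
      (∀ (ξ : Ω →ₘ[μ] ℝ) (x : S₁.carrier), U (ξ • x) = ξ • U x) ∧
      (∀ x, S₂.rnorm (U x) = S₁.rnorm x) := by
  obtain ⟨hc₁, hhom₁, hnorm₁, hdense₁⟩ := h₁
  obtain ⟨hc₂, hhom₂, hnorm₂, hdense₂⟩ := h₂
  have hT1sub : ∀ a b : E, T₁ (a - b) = T₁ a - T₁ b := fun a b =>
    (AddMonoidHom.mk' T₁ hhom₁.1).map_sub a b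
  have hT2sub : ∀ a b : E, T₂ (a - b) = T₂ a - T₂ b := fun a b =>
    (AddMonoidHom.mk' T₂ hhom₂.1).map_sub a b
  have hTdist : ∀ a b : E, S₁.dist (T₁ a) (T₁ b) = S₂.dist (T₂ a) (T₂ b) := by
    intro a b
    rw [rn_dist_def, rn_dist_def, ← hT1sub, ← hT2sub, hnorm₁, hnorm₂]
  have happrox : ∀ z : S₁.carrier, ∃ x : ℕ → E,
      dTendsto S₁.dist (fun k => T₁ (x k)) z := by
    intro z
    choose x hx using fun k : ℕ => hdense₁ z (1/((k:ℝ)+1)) (by positivity)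
    exact ⟨x, squeeze_zero (fun k => rn_dist_nonneg _ _ _) (fun k => (hx k).le)
      tendsto_one_div_add_atTop_nhds_zero_nat⟩
  choose seq hseq using happrox
  have huniq : ∀ (S : RNMod Ω μ) (y : ℕ → S.carrier) (l l' : S.carrier),
      dTendsto S.dist y l → dTendsto S.dist y l' → l = l' := by
    intro S y l l' h h'
    have hsym : Tendsto (fun k => S.dist l (y k)) atTop (nhds 0) :=
      h.congr fun k => rn_dist_symm S (y k) l
    have hsum : Tendsto (fun k => S.dist l (y k) + S.dist (y k) l') atTop (nhds 0) := by
      simpa using hsym.add h'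
    have h0 : S.dist l l' = 0 :=
      eq_zero_of_le_tendsto (rn_dist_nonneg _ _ _) (fun k => rn_dist_triangle S l (y k) l') hsum
    exact (rn_dist_eq_zero_iff S l l').1 h0
  have hconv : ∀ z : S₁.carrier, ∃ w : S₂.carrier,
      dTendsto S₂.dist (fun k => T₂ (seq z k)) w := by
    intro z
    refine hc₂ _ ?_
    intro ε hε
    have h2 : ∀ᶠ k in atTop, S₁.dist (T₁ (seq z k)) z < ε/2 :=
      (tendsto_order.1 (hseq z)).2 (ε/2) (by linarith)
    obtain ⟨N, hN⟩ := eventually_atTop.1 h2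
    refine ⟨N, fun m hm k hk => ?_⟩
    calc S₂.dist (T₂ (seq z m)) (T₂ (seq z k)) = S₁.dist (T₁ (seq z m)) (T₁ (seq z k)) :=
          (hTdist _ _).symm
      _ ≤ S₁.dist (T₁ (seq z m)) z + S₁.dist z (T₁ (seq z k)) := rn_dist_triangle _ _ _ _
      _ < ε/2 + ε/2 := add_lt_add (hN m hm)
          (by rw [rn_dist_symm]; exact hN k hk)
      _ = ε := by ring
  choose U hU using hconv
  have htrans : ∀ (z : S₁.carrier) (x : ℕ → E),
      dTendsto S₁.dist (fun k => T₁ (x k)) z →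
      dTendsto S₂.dist (fun k => T₂ (x k)) (U z) := by
    intro z x hx
    have hsym : Tendsto (fun k => S₁.dist z (T₁ (seq z k))) atTop (nhds 0) :=
      (hseq z).congr fun k => rn_dist_symm S₁ _ _
    refine squeeze_zero (fun k => rn_dist_nonneg _ _ _) (fun k => ?_)
      (g := fun k => S₁.dist (T₁ (x k)) z + S₁.dist z (T₁ (seq z k))
        + S₂.dist (T₂ (seq z k)) (U z))
      (by simpa using (hx.add hsym).add (hU z))
    calc S₂.dist (T₂ (x k)) (U z)
        ≤ S₂.dist (T₂ (x k)) (T₂ (seq z k)) + S₂.dist (T₂ (seq z k)) (U z) :=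
          rn_dist_triangle _ _ _ _
      _ ≤ (S₁.dist (T₁ (x k)) z + S₁.dist z (T₁ (seq z k))) + S₂.dist (T₂ (seq z k)) (U z) := by
          rw [← hTdist]
          exact add_le_add (rn_dist_triangle _ _ _ _) le_rfl
      _ = _ := by ring
  have hUT : ∀ x : E, U (T₁ x) = T₂ x := by
    intro x
    have hconst : dTendsto S₁.dist (fun _ : ℕ => T₁ x) (T₁ x) := by
      simp only [dTendsto, rn_dist_self]; exact tendsto_const_nhds
    have h1 := htrans (T₁ x) (fun _ => x) hconst
    have h2 : dTendsto S₂.dist (fun _ : ℕ => T₂ x) (T₂ x) := by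
      simp only [dTendsto, rn_dist_self]; exact tendsto_const_nhds
    exact huniq S₂ _ _ _ h1 h2
  have hUadd : ∀ z w, U (z + w) = U z + U w := by
    intro z w
    have hsum : dTendsto S₁.dist (fun k => T₁ (seq z k + seq w k)) (z + w) := by
      refine squeeze_zero (fun k => rn_dist_nonneg _ _ _) (fun k => ?_)
        (g := fun k => S₁.dist (T₁ (seq z k)) z + S₁.dist (T₁ (seq w k)) w)
        (by simpa using (hseq z).add (hseq w))
      beta_reduce
      rw [hhom₁.1]; exact rn_dist_add_le S₁ _ _ _ _
    have h1 := htrans _ _ hsum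
    have h2 : dTendsto S₂.dist (fun k => T₂ (seq z k + seq w k)) (U z + U w) := by
      refine squeeze_zero (fun k => rn_dist_nonneg _ _ _) (fun k => ?_)
        (g := fun k => S₂.dist (T₂ (seq z k)) (U z) + S₂.dist (T₂ (seq w k)) (U w))
        (by simpa using (htrans z _ (hseq z)).add (htrans w _ (hseq w)))
      beta_reduce
      rw [hhom₂.1]; exact rn_dist_add_le S₂ _ _ _ _
    exact huniq S₂ _ _ _ h1 h2
  have hUnorm : ∀ z, S₂.rnorm (U z) = S₁.rnorm z := by
    intro z
    have hsym : Tendsto (fun k => S₁.dist z (T₁ (seq z k))) atTop (nhds 0) :=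
      (hseq z).congr fun k => rn_dist_symm S₁ _ _
    have key : ∀ k, dProb μ (S₁.rnorm z) (S₂.rnorm (U z)) ≤
        S₁.dist z (T₁ (seq z k)) + S₂.dist (T₂ (seq z k)) (U z) := by
      intro k
      calc dProb μ (S₁.rnorm z) (S₂.rnorm (U z))
          ≤ dProb μ (S₁.rnorm z) (S₁.rnorm (T₁ (seq z k)))
            + dProb μ (S₁.rnorm (T₁ (seq z k))) (S₂.rnorm (U z)) := dProb_triangle _ _ _
        _ ≤ S₁.dist z (T₁ (seq z k)) + S₂.dist (T₂ (seq z k)) (U z) := by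
            refine add_le_add (dProb_rnorm_le S₁ z _) ?_
            have e : S₁.rnorm (T₁ (seq z k)) = S₂.rnorm (T₂ (seq z k)) := by
              rw [hnorm₁, hnorm₂]
            rw [e]
            exact dProb_rnorm_le S₂ _ _
    have h0 : dProb μ (S₁.rnorm z) (S₂.rnorm (U z)) = 0 :=
      eq_zero_of_le_tendsto (dProb_nonneg _ _) key (by simpa using hsym.add (hU z))
    exact (dProb_eq_zero h0).symm
  have hUsub : ∀ z w, U (z - w) = U z - U w := fun z w =>
    (AddMonoidHom.mk' U hUadd).map_sub z w
  have hUiso : ∀ z w, S₂.dist (U z) (U w) = S₁.dist z w := by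
    intro z w
    rw [rn_dist_def, rn_dist_def, ← hUsub, hUnorm]
  have hUsmul_inf : ∀ (ξ : Ω →ₘ[μ] ℝ) (hξ : ξ ∈ Linf μ) (z : S₁.carrier),
      U (ξ • z) = ξ • U z := by
    intro ξ hξ z
    obtain ⟨c, hc⟩ := hξ
    have h1 : dTendsto S₁.dist (fun k => T₁ ((⟨ξ, ⟨c, hc⟩⟩ : Linf μ) • seq z k)) (ξ • z) := by
      refine squeeze_zero (fun k => rn_dist_nonneg _ _ _) (fun k => ?_)
        (g := fun k => max 1 c * S₁.dist (T₁ (seq z k)) z)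
        (by simpa using (hseq z).const_mul (max 1 c))
      beta_reduce
      rw [hhom₁.2]
      exact rn_dist_smul_le S₁ _ hc _ _
    have h2 := htrans _ _ h1
    have h3 : dTendsto S₂.dist (fun k => T₂ ((⟨ξ, ⟨c, hc⟩⟩ : Linf μ) • seq z k)) (ξ • U z) := by
      refine squeeze_zero (fun k => rn_dist_nonneg _ _ _) (fun k => ?_)
        (g := fun k => max 1 c * S₂.dist (T₂ (seq z k)) (U z))
        (by simpa using (htrans z _ (hseq z)).const_mul (max 1 c))
      beta_reduce
      rw [hhom₂.2]
      exact rn_dist_smul_le S₂ _ hc _ _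
    exact huniq S₂ _ _ _ h2 h3
  have hUsmul : ∀ (ξ : Ω →ₘ[μ] ℝ) (z : S₁.carrier), U (ξ • z) = ξ • U z := by
    intro ξ z
    have key : ∀ k, S₂.dist (U (ξ • z)) (ξ • U z)
        ≤ S₁.dist ((clampAE μ k ξ) • z) (ξ • z)
          + S₂.dist ((clampAE μ k ξ) • U z) (ξ • U z) := by
      intro k
      calc S₂.dist (U (ξ • z)) (ξ • U z)
          ≤ S₂.dist (U (ξ • z)) (U ((clampAE μ k ξ) • z))
            + S₂.dist (U ((clampAE μ k ξ) • z)) (ξ • U z) := rn_dist_triangle _ _ _ _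
        _ = S₁.dist (ξ • z) ((clampAE μ k ξ) • z)
            + S₂.dist ((clampAE μ k ξ) • U z) (ξ • U z) := by
            rw [hUiso, hUsmul_inf (clampAE μ k ξ) (clampAE_mem_Linf k ξ) z]
        _ = _ := by rw [rn_dist_symm S₁]
    have h0 : S₂.dist (U (ξ • z)) (ξ • U z) = 0 :=
      eq_zero_of_le_tendsto (rn_dist_nonneg _ _ _) key
        (by simpa using (rn_dist_clamp_tendsto S₁ ξ z).add (rn_dist_clamp_tendsto S₂ ξ (U z)))
    exact (rn_dist_eq_zero_iff _ _ _).1 h0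
  have hinj : Function.Injective U := by
    intro z w h
    have h0 : S₂.dist (U z) (U w) = 0 := by rw [h, rn_dist_self]
    rw [hUiso] at h0
    exact (rn_dist_eq_zero_iff _ _ _).1 h0
  have hsurj : Function.Surjective U := by
    intro w
    choose y hy using fun k : ℕ => hdense₂ w (1/((k:ℝ)+1)) (by positivity)
    have hyw : dTendsto S₂.dist (fun k => T₂ (y k)) w :=
      squeeze_zero (fun k => rn_dist_nonneg _ _ _) (fun k => (hy k).le)
        tendsto_one_div_add_atTop_nhds_zero_nat
    have hcauchy : dCauchy S₁.dist (fun k => T₁ (y k)) := by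
      intro ε hε
      have h2 : ∀ᶠ k in atTop, S₂.dist (T₂ (y k)) w < ε/2 :=
        (tendsto_order.1 hyw).2 (ε/2) (by linarith)
      obtain ⟨N, hN⟩ := eventually_atTop.1 h2
      refine ⟨N, fun m hm k hk => ?_⟩
      calc S₁.dist (T₁ (y m)) (T₁ (y k)) = S₂.dist (T₂ (y m)) (T₂ (y k)) := hTdist _ _
        _ ≤ S₂.dist (T₂ (y m)) w + S₂.dist w (T₂ (y k)) := rn_dist_triangle _ _ _ _
        _ < ε/2 + ε/2 := add_lt_add (hN m hm) (by rw [rn_dist_symm]; exact hN k hk)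
        _ = ε := by ring
    obtain ⟨z, hz⟩ := hc₁ _ hcauchy
    exact ⟨z, huniq S₂ _ _ _ (htrans z _ hz) hyw⟩
  exact ⟨U, ⟨hinj, hsurj⟩, hUadd, hUsmul, hUnorm⟩


end
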